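/- With notation as in the previous statement, for γ ∈ GL_r(K) with j(γ,z) ≠ 0 and j(γ^{-1}, γ·z) ≠ 0, the matrix 𝔈^{γ^{−1}}(γ·z) is the inverse of 𝔈^γ(z), where γ·z denotes the fractional linear action (γ·z)_i = (a_{i1}z_1+⋯+a_{ir}z_r)/(a_{r1}z_1+⋯+a_{rr}z_r) for 1 ≤ i ≤ r−1 and (γ·z)_r = 1. -/

import Mathlib

/-- The matrix `𝔈^γ(z) = (𝔠^γ_{jl}(z))_{1 ≤ j,l ≤ r-1}` with
`𝔠^γ_{jl}(z) = c^γ_{jl} - c^γ_{jr} z_l`, `c^γ_{jl}` the `(j,l)`-cofactor of `γ`. -/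
def cofMat {K : Type*} [Field K] (n : ℕ)
    (γ : Matrix (Fin (n + 1)) (Fin (n + 1)) K) (z : Fin (n + 1) → K) :
    Matrix (Fin n) (Fin n) K :=
  Matrix.of fun j l =>
    γ.adjugate l.castSucc j.castSucc - γ.adjugate (Fin.last n) j.castSucc * z l.castSucc

/-- Proposition 5.5(ii): for `γ ∈ GL_r(K)` with `j(γ,z) ≠ 0` and `j(γ⁻¹, γ·z) ≠ 0`,
the matrix `𝔈^{γ⁻¹}(γ·z)` is the (two-sided) inverse of `𝔈^γ(z)`, where
`(γ·z)_i = (Σ_l γ_{il} z_l) / (Σ_l γ_{rl} z_l)` is the fractional linear action (note that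
`(γ·z)_r = 1` since `z_r = 1`). -/
theorem stmt10 {K : Type*} [Field K] (n : ℕ) (hn : 1 ≤ n)
    (γ : Matrix (Fin (n + 1)) (Fin (n + 1)) K) (hγ : IsUnit γ.det)
    (z : Fin (n + 1) → K) (hz : z (Fin.last n) = 1)
    (hj : ∑ l, γ (Fin.last n) l * z l ≠ 0)
    (gz : Fin (n + 1) → K)
    (hgz : ∀ i, gz i = (∑ l, γ i l * z l) / ∑ l, γ (Fin.last n) l * z l)
    (hj' : ∑ l, γ⁻¹ (Fin.last n) l * gz l ≠ 0) :
    cofMat n γ⁻¹ gz * cofMat n γ z = 1 ∧ cofMat n γ z * cofMat n γ⁻¹ gz = 1 := by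
  classical
  set J : K := ∑ l, γ (Fin.last n) l * z l with hJ
  have hd : γ.det ≠ 0 := by
    intro h
    rw [h] at hγ
    exact (not_isUnit_zero hγ : _)
  -- adjugate of γ in terms of γ⁻¹
  have hadjA : ∀ a b, γ.adjugate a b = γ.det * γ⁻¹ a b := by
    intro a b
    have := Matrix.inv_def γ
    have h2 : γ⁻¹ a b = (γ.det)⁻¹ * γ.adjugate a b := by
      rw [this]; simp [Ring.inverse_eq_inv']
    rw [h2]
    field_simp
  -- adjugate of γ⁻¹ in terms of γ
  have hdetinv : (γ⁻¹).det = (γ.det)⁻¹ := by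
    rw [Matrix.det_nonsing_inv, Ring.inverse_eq_inv']
  have hinvinv : γ⁻¹⁻¹ = γ := Matrix.nonsing_inv_nonsing_inv γ hγ
  have hγ' : IsUnit (γ⁻¹).det := by
    rw [hdetinv]; exact (IsUnit.inv hγ)
  have hadjB : ∀ a b, (γ⁻¹).adjugate a b = (γ.det)⁻¹ * γ a b := by
    intro a b
    have := Matrix.inv_def γ⁻¹
    have h2 : γ⁻¹⁻¹ a b = ((γ⁻¹).det)⁻¹ * (γ⁻¹).adjugate a b := by
      rw [this]; simp [Ring.inverse_eq_inv']
    rw [hinvinv, hdetinv, inv_inv] at h2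
    have h3 : (γ⁻¹).adjugate a b = (γ.det)⁻¹ * ((γ.det) * (γ⁻¹).adjugate a b) := by
      field_simp
    rw [h3, ← h2]
  have hBA : γ⁻¹ * γ = 1 := Matrix.nonsing_inv_mul γ hγ
  have hBAel : ∀ a b, (∑ k, γ⁻¹ a k * γ k b) = (1 : Matrix (Fin (n+1)) (Fin (n+1)) K) a b := by
    intro a b
    rw [← Matrix.mul_apply, hBA]
  -- key sum identity: ∑ k, γ⁻¹ a k * gz k = z a / J
  have hsum : ∀ a, (∑ k, γ⁻¹ a k * gz k) = z a / J := by
    intro a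
    have : (∑ k, γ⁻¹ a k * gz k) = (∑ k, γ⁻¹ a k * (∑ m, γ k m * z m)) / J := by
      rw [Finset.sum_div]
      refine Finset.sum_congr rfl fun k _ => ?_
      rw [hgz k, mul_div_assoc]
    rw [this]
    congr 1
    calc (∑ k, γ⁻¹ a k * (∑ m, γ k m * z m))
        = ∑ k, ∑ m, γ⁻¹ a k * γ k m * z m := by
          refine Finset.sum_congr rfl fun k _ => ?_
          rw [Finset.mul_sum]
          exact Finset.sum_congr rfl fun m _ => by ring
      _ = ∑ m, ∑ k, γ⁻¹ a k * γ k m * z m := Finset.sum_comm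
      _ = ∑ m, (∑ k, γ⁻¹ a k * γ k m) * z m := by
          exact Finset.sum_congr rfl fun m _ => (Finset.sum_mul _ _ _).symm
      _ = z a := by
          simp only [hBAel, Matrix.one_apply]
          simp
  have hgzlast : gz (Fin.last n) = 1 := by
    rw [hgz, ← hJ, div_self hj]
  have key : cofMat n γ⁻¹ gz * cofMat n γ z = 1 := by
    ext j l
    rw [Matrix.mul_apply]
    simp only [cofMat, Matrix.of_apply, hadjA, hadjB]
    have step1 : ∀ k : Fin n,
        ((γ.det)⁻¹ * γ k.castSucc j.castSucc - (γ.det)⁻¹ * γ (Fin.last n) j.castSucc * gz k.castSucc) *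
          (γ.det * γ⁻¹ l.castSucc k.castSucc - γ.det * γ⁻¹ (Fin.last n) k.castSucc * z l.castSucc)
        = (γ k.castSucc j.castSucc - γ (Fin.last n) j.castSucc * gz k.castSucc) *
          (γ⁻¹ l.castSucc k.castSucc - γ⁻¹ (Fin.last n) k.castSucc * z l.castSucc) := by
      intro k
      field_simp
    rw [Finset.sum_congr rfl fun k _ => step1 k]
    -- extend the sum to all of Fin (n+1)
    have step2 : (∑ k : Fin n,
        (γ k.castSucc j.castSucc - γ (Fin.last n) j.castSucc * gz k.castSucc) *
          (γ⁻¹ l.castSucc k.castSucc - γ⁻¹ (Fin.last n) k.castSucc * z l.castSucc))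
        = ∑ k : Fin (n+1),
        (γ k j.castSucc - γ (Fin.last n) j.castSucc * gz k) *
          (γ⁻¹ l.castSucc k - γ⁻¹ (Fin.last n) k * z l.castSucc) := by
      rw [Fin.sum_univ_castSucc
        (f := fun k : Fin (n+1) => (γ k j.castSucc - γ (Fin.last n) j.castSucc * gz k) *
          (γ⁻¹ l.castSucc k - γ⁻¹ (Fin.last n) k * z l.castSucc))]
      rw [hgzlast]
      ring_nf
      exact Finset.sum_congr rfl fun x _ => by ring
    rw [step2]
    have step3 : ∀ k : Fin (n+1),
        (γ k j.castSucc - γ (Fin.last n) j.castSucc * gz k) *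
          (γ⁻¹ l.castSucc k - γ⁻¹ (Fin.last n) k * z l.castSucc)
        = γ⁻¹ l.castSucc k * γ k j.castSucc
          - (γ⁻¹ (Fin.last n) k * γ k j.castSucc) * z l.castSucc
          - γ (Fin.last n) j.castSucc * (γ⁻¹ l.castSucc k * gz k)
          + (γ (Fin.last n) j.castSucc * z l.castSucc) * (γ⁻¹ (Fin.last n) k * gz k) := by
      intro k; ring
    rw [Finset.sum_congr rfl fun k _ => step3 k]
    rw [Finset.sum_add_distrib, Finset.sum_sub_distrib, Finset.sum_sub_distrib,
      ← Finset.sum_mul, ← Finset.mul_sum, ← Finset.mul_sum]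
    rw [hBAel, hBAel, hsum, hsum, hz]
    have hlast : (1 : Matrix (Fin (n+1)) (Fin (n+1)) K) (Fin.last n) j.castSucc = 0 := by
      rw [Matrix.one_apply_ne]
      exact (Fin.castSucc_lt_last j).ne'
    rw [hlast]
    have : (1 : Matrix (Fin (n+1)) (Fin (n+1)) K) l.castSucc j.castSucc
        = (1 : Matrix (Fin n) (Fin n) K) j l := by
      simp only [Matrix.one_apply, Fin.castSucc_inj]
      by_cases h : l = j
      · simp [h]
      · simp [h, Ne.symm h]
    rw [this]
    field_simp
    ring
  exact ⟨key, mul_eq_one_comm.mp key⟩
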